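/- Let (X,d) be a finite semimetric space and let B be a closed ball of X with |B| ≥ 2. Then B has at least two direct predecessors in the Hasse diagram of the poset of closed balls of X ordered by inclusion, and the union of all direct predecessors of B equals B. -/

import Mathlib

/-- A closed ball of a semimetric space. -/
def IsClosedBall {X : Type*} (d : X → X → ℝ) (S : Set X) : Prop :=
  ∃ t : X, ∃ r : ℝ, 0 ≤ r ∧ S = {x : X | d x t ≤ r}

/-- `S` is a direct predecessor of `B` in the Hasse diagram of the poset of
closed balls ordered by inclusion. -/
def IsDirectPred {X : Type*} (d : X → X → ℝ) (S B : Set X) : Prop :=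
  IsClosedBall d S ∧ S ⊂ B ∧
    ∀ W : Set X, IsClosedBall d W → S ⊂ W → W ⊂ B → False

lemma singleton_isClosedBall {X : Type*} (d : X → X → ℝ)
    (hnonneg : ∀ x y, 0 ≤ d x y) (hzero : ∀ x y, d x y = 0 ↔ x = y) (x : X) :
    IsClosedBall d {x} := by
  refine ⟨x, 0, le_refl 0, ?_⟩
  ext y
  simp only [Set.mem_singleton_iff, Set.mem_setOf_eq]
  constructor
  · rintro rfl
    exact le_of_eq ((hzero _ _).mpr rfl)
  · intro h
    exact (hzero y x).mp (le_antisymm h (hnonneg y x))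

lemma exists_direct_pred {X : Type*} [Fintype X] (d : X → X → ℝ)
    (B S : Set X) (hS : IsClosedBall d S) (hSB : S ⊂ B) :
    ∃ P : Set X, S ⊆ P ∧ IsDirectPred d P B := by
  set 𝒮 : Set (Set X) := {W | IsClosedBall d W ∧ S ⊆ W ∧ W ⊂ B} with h𝒮
  have hfin : 𝒮.Finite := Set.toFinite _
  have hne : 𝒮.Nonempty := ⟨S, hS, subset_refl S, hSB⟩
  obtain ⟨P, hP, hmax⟩ := hfin.exists_maximalFor Set.ncard 𝒮 hne
  refine ⟨P, hP.2.1, hP.1, hP.2.2, ?_⟩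
  intro W hW hPW hWB
  have hWmem : W ∈ 𝒮 := ⟨hW, hP.2.1.trans hPW.subset, hWB⟩
  have hle : P.ncard ≤ W.ncard := Set.ncard_le_ncard hPW.subset (Set.toFinite W)
  have := hmax (j := W) hWmem hle
  have hlt : P.ncard < W.ncard := Set.ncard_lt_ncard hPW (Set.toFinite W)
  omega

/-- In a finite semimetric space, every closed ball with at least two points
has at least two direct predecessors in the Hasse diagram of the poset of
closed balls, and the union of all its direct predecessors equals the ball. -/
theorem ball_direct_predecessors {X : Type*} [Fintype X]
    (d : X → X → ℝ)
    (hnonneg : ∀ x y, 0 ≤ d x y)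
    (hsymm : ∀ x y, d x y = d y x)
    (hzero : ∀ x y, d x y = 0 ↔ x = y)
    (B : Set X) (hB : IsClosedBall d B) (hB2 : 2 ≤ B.ncard) :
    (∃ S₁ S₂ : Set X, S₁ ≠ S₂ ∧ IsDirectPred d S₁ B ∧ IsDirectPred d S₂ B) ∧
    ⋃₀ {S : Set X | IsDirectPred d S B} = B := by
  -- for each x ∈ B, {x} ⊂ B
  have hsing : ∀ x ∈ B, ({x} : Set X) ⊂ B := by
    intro x hx
    refine ⟨Set.singleton_subset_iff.mpr hx, fun hBx => ?_⟩
    have : B.ncard ≤ 1 := by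
      have := Set.ncard_le_ncard hBx (Set.toFinite ({x} : Set X))
      simpa using this
    omega
  have hpred : ∀ x ∈ B, ∃ P : Set X, x ∈ P ∧ IsDirectPred d P B := by
    intro x hx
    obtain ⟨P, hsub, hP⟩ := exists_direct_pred d B {x}
      (singleton_isClosedBall d hnonneg hzero x) (hsing x hx)
    exact ⟨P, hsub rfl, hP⟩
  constructor
  · have hxB : B.Nonempty := Set.nonempty_of_ncard_ne_zero (by omega)
    obtain ⟨x, hx⟩ := hxB
    obtain ⟨P₁, hxP₁, hP₁⟩ := hpred x hx
    obtain ⟨z, hzB, hzP₁⟩ := Set.exists_of_ssubset hP₁.2.1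
    obtain ⟨P₂, hzP₂, hP₂⟩ := hpred z hzB
    exact ⟨P₁, P₂, fun h => hzP₁ (h ▸ hzP₂), hP₁, hP₂⟩
  · apply subset_antisymm
    · intro x hx
      obtain ⟨S, hS, hxS⟩ := hx
      exact hS.2.1.subset hxS
    · intro x hx
      obtain ⟨P, hxP, hP⟩ := hpred x hx
      exact ⟨P, hP, hxP⟩
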